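/- Let L ≥ μ > 0 with κ = L/μ, δ > 0, and α₋ = (1/2)(δ + 3L/δ - √((δ + L/δ)² - 4μ)). Then the strict inequality (1/3)(δ + 4L/δ) < α₋ holds if and only if κ < 9/8 and δ ∈ (δ₋, δ₊), where δ_± = (1/(2√2))(3√μ ± √(9μ - 8L)). -/

import Mathlib

set_option maxHeartbeats 1000000 in
/-- Characterization of when (1/3)(δ + 4L/δ) < α₋. -/
theorem threshold_lt_alpha_minus_iff (L μ δ : ℝ) (hμ : 0 < μ) (hLμ : μ ≤ L) (hδ : 0 < δ) :
    1 / 3 * (δ + 4 * L / δ) <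
      1 / 2 * (δ + 3 * L / δ - Real.sqrt ((δ + L / δ) ^ 2 - 4 * μ)) ↔
    (L / μ < 9 / 8 ∧
      1 / (2 * Real.sqrt 2) * (3 * Real.sqrt μ - Real.sqrt (9 * μ - 8 * L)) < δ ∧
      δ < 1 / (2 * Real.sqrt 2) * (3 * Real.sqrt μ + Real.sqrt (9 * μ - 8 * L))) := by
  have hLpos : 0 < L := lt_of_lt_of_le hμ hLμ
  have hδ2 : (0:ℝ) < δ ^ 2 := by positivity
  have e1 : 4 * L / δ = 4 * (L / δ) := by ring
  have e2 : 3 * L / δ = 3 * (L / δ) := by ring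
  have hLδ : 0 < L / δ := by positivity
  have hs : 0 < δ + L / δ := by positivity
  -- Step 1: rewrite the inequality as sqrt(...) < (δ + L/δ)/3
  have step1 : (1 / 3 * (δ + 4 * L / δ) <
      1 / 2 * (δ + 3 * L / δ - Real.sqrt ((δ + L / δ) ^ 2 - 4 * μ))) ↔
      Real.sqrt ((δ + L / δ) ^ 2 - 4 * μ) < (δ + L / δ) / 3 := by
    rw [e1, e2]
    constructor <;> intro h <;> linarith
  -- Step 2: remove the sqrt
  have step2 : Real.sqrt ((δ + L / δ) ^ 2 - 4 * μ) < (δ + L / δ) / 3 ↔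
      2 * (δ + L / δ) ^ 2 < 9 * μ := by
    rw [Real.sqrt_lt' (by positivity)]
    constructor <;> intro h <;> nlinarith [h]
  -- Step 3: clear denominators
  have hss : (δ + L / δ) ^ 2 * δ ^ 2 = (δ ^ 2 + L) ^ 2 := by
    field_simp
  have step3 : 2 * (δ + L / δ) ^ 2 < 9 * μ ↔ 2 * (δ ^ 2 + L) ^ 2 < 9 * μ * δ ^ 2 := by
    constructor <;> intro h <;> nlinarith [h, hss, hδ2]
  rw [step1, step2, step3]
  -- abbreviations
  set m := Real.sqrt μ with hm_def
  set r := Real.sqrt (9 * μ - 8 * L) with hr_def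
  set q := Real.sqrt 2 with hq_def
  have hq : q ^ 2 = 2 := Real.sq_sqrt (by norm_num)
  have hqpos : 0 < q := Real.sqrt_pos.mpr (by norm_num)
  have hm : m ^ 2 = μ := Real.sq_sqrt hμ.le
  have hmpos : 0 < m := Real.sqrt_pos.mpr hμ
  have hqm2 : (q * m) ^ 2 = 2 * μ := by rw [mul_pow, hq, hm]
  constructor
  · intro H
    have h8 : 8 * L < 9 * μ := by nlinarith [sq_nonneg (δ ^ 2 - L), hδ2]
    have hκ : L / μ < 9 / 8 := by
      rw [div_lt_div_iff₀ hμ (by norm_num)]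
      linarith
    have hr2 : r ^ 2 = 9 * μ - 8 * L := Real.sq_sqrt (by linarith)
    have hrpos : 0 < r := Real.sqrt_pos.mpr (by linarith)
    -- squared form of the key inequality
    have expand2 : (3 * (q * m) * δ) ^ 2 = 18 * μ * δ ^ 2 := by
      linear_combination 9 * δ ^ 2 * hqm2
    have expand : ∀ x : ℝ, (2 * x) ^ 2 = 4 * x ^ 2 := fun x => by ring
    have hsq : (2 * (δ ^ 2 + L)) ^ 2 < (3 * (q * m) * δ) ^ 2 := by
      rw [expand2, expand]; linarith
    have key : 2 * (δ ^ 2 + L) < 3 * (q * m) * δ :=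
      lt_of_pow_lt_pow_left₀ 2 (by positivity) hsq
    have expand3 : (2 * q * δ - 3 * m) ^ 2 = 8 * δ ^ 2 - 12 * (q * m) * δ + 9 * μ := by
      linear_combination 4 * δ ^ 2 * hq + 9 * hm
    have hsq2 : (2 * q * δ - 3 * m) ^ 2 < r ^ 2 := by
      rw [expand3, hr2]; linarith
    obtain ⟨hx1', hx2'⟩ := abs_lt_of_sq_lt_sq' hsq2 hrpos.le
    have hx1 : 3 * m - r < 2 * q * δ := by linarith
    have hx2 : 2 * q * δ < 3 * m + r := by linarith
    refine ⟨hκ, ?_, ?_⟩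
    · rw [show (1 : ℝ) / (2 * q) * (3 * m - r) = (3 * m - r) / (2 * q) by ring,
        div_lt_iff₀ (by positivity)]
      nlinarith [hx1]
    · rw [show (1 : ℝ) / (2 * q) * (3 * m + r) = (3 * m + r) / (2 * q) by ring,
        lt_div_iff₀ (by positivity)]
      nlinarith [hx2]
  · rintro ⟨hκ, hb1, hb2⟩
    have h8 : 8 * L < 9 * μ := by
      rw [div_lt_div_iff₀ hμ (by norm_num)] at hκ
      linarith
    have hr2 : r ^ 2 = 9 * μ - 8 * L := Real.sq_sqrt (by linarith)
    have hrpos : 0 < r := Real.sqrt_pos.mpr (by linarith)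
    rw [show (1 : ℝ) / (2 * q) * (3 * m - r) = (3 * m - r) / (2 * q) by ring,
      div_lt_iff₀ (by positivity)] at hb1
    rw [show (1 : ℝ) / (2 * q) * (3 * m + r) = (3 * m + r) / (2 * q) by ring,
      lt_div_iff₀ (by positivity)] at hb2
    have hx1 : 3 * m - r < 2 * q * δ := by nlinarith [hb1]
    have hx2 : 2 * q * δ < 3 * m + r := by nlinarith [hb2]
    have hsq2 : (2 * q * δ - 3 * m) ^ 2 < r ^ 2 :=
      sq_lt_sq' (by linarith) (by linarith)
    have expand3 : (2 * q * δ - 3 * m) ^ 2 = 8 * δ ^ 2 - 12 * (q * m) * δ + 9 * μ := by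
      linear_combination 4 * δ ^ 2 * hq + 9 * hm
    rw [expand3, hr2] at hsq2
    have key : 2 * (δ ^ 2 + L) < 3 * (q * m) * δ := by linarith
    have hsq3 : (2 * (δ ^ 2 + L)) ^ 2 < (3 * (q * m) * δ) ^ 2 :=
      pow_lt_pow_left₀ key (by positivity) (by norm_num : (2:ℕ) ≠ 0)
    have expand2 : (3 * (q * m) * δ) ^ 2 = 18 * μ * δ ^ 2 := by
      linear_combination 9 * δ ^ 2 * hqm2
    rw [expand2, show (2 * (δ ^ 2 + L)) ^ 2 = 4 * (δ ^ 2 + L) ^ 2 from by ring] at hsq3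
    linarith
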